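/- Let b, c ∈ k with c ≠ 0. Then: (1) the right Λ-module M′(1,b,c) is torsionless (i.e., admits an injective right-Λ-linear map into some finite free right module Λⁿ) if and only if b ≠ −1; (2) M′(1,b,c) satisfies Ext¹(M′(1,b,c), Λ) = 0 in the category of right Λ-modules if and only if b ≠ −q. Moreover, in case (2) with b ≠ −q, the kernel of the projective cover Λ → M′(1,b,c), namely U′(1,b,c), is isomorphic as a right Λ-module to M′(ω′(1,b,c)), where ω′(1,b,c) = (1, q⁻¹b, −(1+q⁻¹b)·c). -/

import Mathlib

open CategoryTheory Limits Opposite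

/-- The algebra `Λ = Λ(q)` of Ringel–Zhang: a `k`-algebra with distinguished elements
`x, y, z` satisfying the defining relations
`x² = y² = z² = 0`, `yz = 0`, `xy + q·yx = 0`, `xz = zx`, `zy = zx`,
and admitting the `k`-basis `{1, x, y, z, yx, zx}`.
Any such algebra is canonically isomorphic to the quotient of the free algebra
`k⟨x,y,z⟩` by the two-sided ideal generated by these relations. -/
structure LambdaAlg (k : Type) [Field k] (q : k) (Λ : Type) [Ring Λ] [Algebra k Λ] :
    Type where
  x : Λ
  y : Λ
  z : Λ
  hxx : x * x = 0
  hyy : y * y = 0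
  hzz : z * z = 0
  hyz : y * z = 0
  hxy : x * y + q • (y * x) = 0
  hxz : x * z - z * x = 0
  hzy : z * y - z * x = 0
  basis : Module.Basis (Fin 6) k Λ
  hb0 : basis 0 = 1
  hb1 : basis 1 = x
  hb2 : basis 2 = y
  hb3 : basis 3 = z
  hb4 : basis 4 = y * x
  hb5 : basis 5 = z * x

namespace LambdaAlg

variable {k : Type} [Field k] {q : k} {Λ : Type} [Ring Λ] [Algebra k Λ]

/-- The element `ax + by + cz` of `Λ`. -/
def w (D : LambdaAlg k q Λ) (a b c : k) : Λ := a • D.x + b • D.y + c • D.z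

/-- The left ideal `U(a,b,c) = Λ(ax+by+cz) + Λ·yx + Λ·zx` of `Λ`. -/
def U (D : LambdaAlg k q Λ) (a b c : k) : Submodule Λ Λ :=
  Submodule.span Λ {D.w a b c, D.y * D.x, D.z * D.x}

/-- The left `Λ`-module `M(a,b,c) = Λ/U(a,b,c)`. -/
abbrev M (D : LambdaAlg k q Λ) (a b c : k) : Type := Λ ⧸ D.U a b c

/-- The right ideal `U′(a,b,c) = (ax+by+cz)Λ + yx·Λ + zx·Λ` of `Λ`,
viewed as a `Λᵐᵒᵖ`-submodule of `Λ`. -/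
def U' (D : LambdaAlg k q Λ) (a b c : k) : Submodule Λᵐᵒᵖ Λ :=
  Submodule.span Λᵐᵒᵖ {D.w a b c, D.y * D.x, D.z * D.x}

/-- The right `Λ`-module `M′(a,b,c) = Λ/U′(a,b,c)` (a module over `Λᵐᵒᵖ`). -/
abbrev M' (D : LambdaAlg k q Λ) (a b c : k) : Type := Λ ⧸ D.U' a b c

/-- The `k`-subspace `{m ∈ M : x·m = y·m = z·m = 0}` of a left `Λ`-module `M`;
since `x, y, z` generate `rad Λ` and every simple `Λ`-module is isomorphic to `k`,
this is the socle of `M`. -/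
def ann (D : LambdaAlg k q Λ) (M : Type) [AddCommGroup M] [Module k M] [Module Λ M]
    [IsScalarTower k Λ M] : Submodule k M where
  carrier := {m | D.x • m = 0 ∧ D.y • m = 0 ∧ D.z • m = 0}
  add_mem' := by
    rintro a b ⟨h1, h2, h3⟩ ⟨g1, g2, g3⟩
    simp [smul_add, h1, h2, h3, g1, g2, g3]
  zero_mem' := by simp
  smul_mem' := by
    rintro a m ⟨h1, h2, h3⟩
    refine ⟨?_, ?_, ?_⟩ <;> rw [smul_comm] <;> simp [h1, h2, h3]

/-- The submodule `(rad Λ)·M = x·M + y·M + z·M` of a left `Λ`-module `M`. -/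
def radM (D : LambdaAlg k q Λ) (M : Type) [AddCommGroup M] [Module Λ M] :
    Submodule Λ M :=
  Submodule.span Λ
    (Set.range (fun m : M => D.x • m) ∪ Set.range (fun m : M => D.y • m) ∪
      Set.range (fun m : M => D.z • m))

end LambdaAlg

/-- A module is indecomposable if it is nonzero and is not the direct sum of two
nonzero submodules. -/
def IsIndecomposable (R : Type) [Ring R] (M : Type) [AddCommGroup M] [Module R M] :
    Prop :=
  Nontrivial M ∧
    ∀ N₁ N₂ : Submodule R M, N₁ ⊓ N₂ = ⊥ → N₁ ⊔ N₂ = ⊤ → N₁ = ⊥ ∨ N₂ = ⊥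

/-- A module is torsionless if it admits an injective linear map into a finite free
module. -/
def IsTorsionless (R : Type) [Ring R] (M : Type) [AddCommGroup M] [Module R M] : Prop :=
  ∃ (n : ℕ) (f : M →ₗ[R] (Fin n → R)), Function.Injective f

/-- The canonical evaluation map `M → M** = Hom_{Λᵒᵖ}(Hom_Λ(M, Λ), Λ)`,
sending `m` to `f ↦ f m`. -/
def evalMap (Λ : Type) [Ring Λ] (M : Type) [AddCommGroup M] [Module Λ M] :
    M → ((M →ₗ[Λ] Λ) →ₗ[Λᵐᵒᵖ] Λ) := fun m =>
  { toFun := fun f => f m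
    map_add' := fun _ _ => rfl
    map_smul' := fun _ _ => rfl }

/-- The transformation `ω′(a,b,c) = (a, q⁻¹b, −((a+q⁻¹b)/a)·c)` on triples. -/
def omegaPrime {k : Type} [Field k] (q : k) (t : k × k × k) : k × k × k :=
  (t.1, q⁻¹ * t.2.1, -((t.1 + q⁻¹ * t.2.1) / t.1) * t.2.2)


namespace LambdaAlg

variable {k : Type} [Field k] {q : k} {Λ : Type} [Ring Λ] [Algebra k Λ]
variable (D : LambdaAlg k q Λ)

lemma mxy : D.x * D.y = -(q • (D.y * D.x)) := eq_neg_of_add_eq_zero_left D.hxy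
lemma mxz : D.x * D.z = D.z * D.x := sub_eq_zero.mp D.hxz
lemma mzy : D.z * D.y = D.z * D.x := sub_eq_zero.mp D.hzy

lemma mzYx : D.z * (D.y * D.x) = 0 := by
  rw [← mul_assoc, D.mzy, mul_assoc, D.hxx, mul_zero]
lemma myYx : D.y * (D.y * D.x) = 0 := by rw [← mul_assoc, D.hyy, zero_mul]

lemma mYx : (D.y * D.x) * D.x = 0 := by rw [mul_assoc, D.hxx, mul_zero]
lemma mYy : (D.y * D.x) * D.y = 0 := by
  rw [mul_assoc, D.mxy, mul_neg, mul_smul_comm, D.myYx, smul_zero, neg_zero]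
lemma mYz : (D.y * D.x) * D.z = 0 := by
  rw [mul_assoc, D.mxz, ← mul_assoc, D.hyz, zero_mul]
lemma mZx : (D.z * D.x) * D.x = 0 := by rw [mul_assoc, D.hxx, mul_zero]
lemma mZy : (D.z * D.x) * D.y = 0 := by
  rw [mul_assoc, D.mxy, mul_neg, mul_smul_comm, D.mzYx, smul_zero, neg_zero]
lemma mZz : (D.z * D.x) * D.z = 0 := by
  rw [mul_assoc, D.mxz, ← mul_assoc, D.hzz, zero_mul]
lemma mxY : D.x * (D.y * D.x) = 0 := by
  rw [← mul_assoc, D.mxy, neg_mul, smul_mul_assoc, D.mYx, smul_zero, neg_zero]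
lemma mxZ : D.x * (D.z * D.x) = 0 := by
  rw [← mul_assoc, D.mxz, D.mZx]
lemma myZ : D.y * (D.z * D.x) = 0 := by rw [← mul_assoc, D.hyz, zero_mul]
lemma mzZ : D.z * (D.z * D.x) = 0 := by rw [← mul_assoc, D.hzz, zero_mul]
lemma mYY : (D.y * D.x) * (D.y * D.x) = 0 := by
  rw [← mul_assoc, mul_assoc _ D.x D.y, D.mxy, mul_neg, mul_smul_comm, D.myYx,
    smul_zero, neg_zero, zero_mul]
lemma mYZ : (D.y * D.x) * (D.z * D.x) = 0 := by rw [← mul_assoc, D.mYz, zero_mul]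
lemma mZY : (D.z * D.x) * (D.y * D.x) = 0 := by rw [← mul_assoc, D.mZy, zero_mul]
lemma mZZ : (D.z * D.x) * (D.z * D.x) = 0 := by rw [← mul_assoc, D.mZz, zero_mul]

/-- decomposition of an arbitrary element in the basis -/
lemma exists_repr (a : Λ) : ∃ c : Fin 6 → k,
    a = c 0 • 1 + c 1 • D.x + c 2 • D.y + c 3 • D.z + c 4 • (D.y * D.x)
      + c 5 • (D.z * D.x) := by
  refine ⟨fun i => D.basis.repr a i, ?_⟩
  conv_lhs => rw [← D.basis.sum_repr a]
  rw [Fin.sum_univ_six, D.hb0, D.hb1, D.hb2, D.hb3, D.hb4, D.hb5]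

lemma indep {c : Fin 6 → k}
    (h : c 0 • 1 + c 1 • D.x + c 2 • D.y + c 3 • D.z + c 4 • (D.y * D.x)
      + c 5 • (D.z * D.x) = 0) : ∀ i, c i = 0 := by
  have hli := D.basis.linearIndependent
  rw [Fintype.linearIndependent_iff] at hli
  refine hli c ?_
  rw [Fin.sum_univ_six, D.hb0, D.hb1, D.hb2, D.hb3, D.hb4, D.hb5]
  exact h

lemma w_def (β γ : k) : D.w 1 β γ = D.x + β • D.y + γ • D.z := by
  rw [w, one_smul]

/-- Expansion of `w(1,β,γ) * a` in coordinates. -/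
lemma w_mul_expand (β γ c0 c1 c2 c3 c4 c5 : k) :
    D.w 1 β γ * (c0 • 1 + c1 • D.x + c2 • D.y + c3 • D.z + c4 • (D.y * D.x)
      + c5 • (D.z * D.x)) =
    c0 • D.x + (c0 * β) • D.y + (c0 * γ) • D.z
      + (c1 * β - q * c2) • (D.y * D.x) + (c1 * γ + c2 * γ + c3) • (D.z * D.x) := by
  rw [w_def]
  simp only [mul_add, add_mul, mul_smul_comm, smul_mul_assoc, mul_one,
    D.hxx, D.hyy, D.hzz, D.hyz, D.mxy, D.mxz, D.mzy, D.mxY, D.mxZ, D.myYx, D.myZ,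
    D.mzYx, D.mzZ, smul_zero, smul_neg, smul_smul]
  module

/-- Expansion of `a * w(1,β,γ)` in coordinates. -/
lemma mul_w_expand (β γ c0 c1 c2 c3 c4 c5 : k) :
    (c0 • 1 + c1 • D.x + c2 • D.y + c3 • D.z + c4 • (D.y * D.x)
      + c5 • (D.z * D.x)) * D.w 1 β γ =
    c0 • D.x + (c0 * β) • D.y + (c0 * γ) • D.z
      + (c2 - q * β * c1) • (D.y * D.x)
      + (γ * c1 + (1 + β) * c3) • (D.z * D.x) := by
  rw [w_def]
  simp only [mul_add, add_mul, mul_smul_comm, smul_mul_assoc, one_mul,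
    D.hxx, D.hyy, D.hzz, D.hyz, D.mxy, D.mxz, D.mzy, D.mYx, D.mYy, D.mYz,
    D.mZx, D.mZy, D.mZz, smul_zero, smul_neg, smul_smul]
  module


lemma indep6 {a0 a1 a2 a3 a4 a5 : k}
    (h : a0 • (1:Λ) + a1 • D.x + a2 • D.y + a3 • D.z + a4 • (D.y * D.x)
      + a5 • (D.z * D.x) = 0) :
    a0 = 0 ∧ a1 = 0 ∧ a2 = 0 ∧ a3 = 0 ∧ a4 = 0 ∧ a5 = 0 := by
  have H := D.indep (c := ![a0, a1, a2, a3, a4, a5]) (by simpa using h)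
  exact ⟨H 0, H 1, H 2, H 3, H 4, H 5⟩

lemma w_mul_Y (β γ : k) : D.w 1 β γ * (D.y * D.x) = 0 := by
  rw [w_def]
  simp only [add_mul, smul_mul_assoc, D.mxY, D.myYx, D.mzYx, smul_zero, add_zero]

lemma w_mul_Z (β γ : k) : D.w 1 β γ * (D.z * D.x) = 0 := by
  rw [w_def]
  simp only [add_mul, smul_mul_assoc, D.mxZ, D.myZ, D.mzZ, smul_zero, add_zero]

lemma w_mul_w' (hq : q ≠ 0) (β γ : k) :
    D.w 1 β γ * D.w 1 (q⁻¹ * β) (-(1 + q⁻¹ * β) * γ) = 0 := by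
  have : D.w 1 (q⁻¹ * β) (-(1 + q⁻¹ * β) * γ)
      = (0:k) • (1:Λ) + (1:k) • D.x + (q⁻¹ * β) • D.y + (-(1 + q⁻¹ * β) * γ) • D.z
        + (0:k) • (D.y * D.x) + (0:k) • (D.z * D.x) := by
    rw [w_def]; module
  rw [this, D.w_mul_expand]
  match_scalars <;> (field_simp; try ring)

/-- L1: the kernel of left-multiplication by `w(1,β,γ)`. -/
lemma w_mul_eq_zero_iff (hq : q ≠ 0) (β γ : k) (a : Λ) :
    D.w 1 β γ * a = 0 ↔ ∃ r s t : k,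
      a = r • D.w 1 (q⁻¹ * β) (-(1 + q⁻¹ * β) * γ) + s • (D.y * D.x) + t • (D.z * D.x) := by
  constructor
  · intro h
    obtain ⟨c, rfl⟩ := D.exists_repr a
    rw [D.w_mul_expand] at h
    obtain ⟨-, h1, -, -, h4, h5⟩ := D.indep6 (a0 := 0) (by rw [zero_smul, zero_add]; exact h)
    refine ⟨c 1, c 4, c 5, ?_⟩
    have hc2 : c 2 = c 1 * (q⁻¹ * β) := by
      linear_combination (-q⁻¹) * h4 - c 2 * (inv_mul_cancel₀ hq)
    rw [h1, w_def]
    match_scalars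
    · ring
    · ring
    · linear_combination hc2
    · linear_combination h5 - γ * hc2
    · ring
    · ring
  · rintro ⟨r, s, t, rfl⟩
    rw [mul_add, mul_add, mul_smul_comm, mul_smul_comm, mul_smul_comm,
      D.w_mul_w' hq, D.w_mul_Y, D.w_mul_Z, smul_zero, smul_zero, smul_zero,
      add_zero, add_zero]

lemma w_mul_combo (β γ r μ ν : k) :
    D.w 1 β γ * (r • (1:Λ) + μ • D.y + ν • D.z)
      = r • D.w 1 β γ + (-(q * μ)) • (D.y * D.x) + (μ * γ + ν) • (D.z * D.x) := by
  have : r • (1:Λ) + μ • D.y + ν • D.z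
      = r • (1:Λ) + (0:k) • D.x + μ • D.y + ν • D.z + (0:k) • (D.y * D.x)
        + (0:k) • (D.z * D.x) := by module
  rw [this, D.w_mul_expand, w_def]
  match_scalars <;> ring

/-- L2: the range of left-multiplication by `w(1,β,γ)`. -/
lemma exists_w_mul_iff (hq : q ≠ 0) (β γ : k) (a : Λ) :
    (∃ m, D.w 1 β γ * m = a) ↔ ∃ r s t : k,
      a = r • D.w 1 β γ + s • (D.y * D.x) + t • (D.z * D.x) := by
  constructor
  · rintro ⟨m, rfl⟩
    obtain ⟨c, rfl⟩ := D.exists_repr m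
    rw [D.w_mul_expand]
    refine ⟨c 0, c 1 * β - q * c 2, c 1 * γ + c 2 * γ + c 3, ?_⟩
    rw [w_def]
    module
  · rintro ⟨r, s, t, rfl⟩
    refine ⟨r • (1:Λ) + (-(q⁻¹ * s)) • D.y + (q⁻¹ * s * γ + t) • D.z, ?_⟩
    rw [D.w_mul_combo]
    match_scalars <;> (field_simp; try ring)

/-- products of socle elements with a general element -/
lemma Y_mul_eq (a : Λ) : ∃ r : k, (D.y * D.x) * a = r • (D.y * D.x) := by
  obtain ⟨c, rfl⟩ := D.exists_repr a
  refine ⟨c 0, ?_⟩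
  simp only [mul_add, mul_smul_comm, mul_one, D.mYx, D.mYy, D.mYz, D.mYY, D.mYZ,
    smul_zero, add_zero]

lemma Z_mul_eq (a : Λ) : ∃ r : k, (D.z * D.x) * a = r • (D.z * D.x) := by
  obtain ⟨c, rfl⟩ := D.exists_repr a
  refine ⟨c 0, ?_⟩
  simp only [mul_add, mul_smul_comm, mul_one, D.mZx, D.mZy, D.mZz, D.mZY, D.mZZ,
    smul_zero, add_zero]

/-- L3: membership in the right ideal `U'(1,β,γ)`. -/
lemma mem_U'_iff (hq : q ≠ 0) (β γ : k) (a : Λ) :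
    a ∈ Submodule.span Λᵐᵒᵖ {D.w 1 β γ, D.y * D.x, D.z * D.x} ↔
      ∃ r s t : k, a = r • D.w 1 β γ + s • (D.y * D.x) + t • (D.z * D.x) := by
  constructor
  · intro h
    induction h using Submodule.span_induction with
    | mem v hv =>
      rcases hv with rfl | rfl | rfl
      · exact ⟨1, 0, 0, by module⟩
      · exact ⟨0, 1, 0, by module⟩
      · exact ⟨0, 0, 1, by module⟩
    | zero => exact ⟨0, 0, 0, by module⟩
    | add v v' _ _ hv hv' =>
      obtain ⟨r, s, t, rfl⟩ := hv
      obtain ⟨r', s', t', rfl⟩ := hv'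
      exact ⟨r + r', s + s', t + t', by module⟩
    | smul m v _ hv =>
      obtain ⟨r, s, t, rfl⟩ := hv
      rw [MulOpposite.smul_eq_mul_unop, add_mul, add_mul, smul_mul_assoc,
        smul_mul_assoc, smul_mul_assoc]
      obtain ⟨r1, s1, t1, h1⟩ := (D.exists_w_mul_iff hq β γ (D.w 1 β γ * m.unop)).mp
        ⟨m.unop, rfl⟩
      obtain ⟨r2, h2⟩ := D.Y_mul_eq m.unop
      obtain ⟨r3, h3⟩ := D.Z_mul_eq m.unop
      rw [h1, h2, h3]
      exact ⟨r * r1, r * s1 + s * r2, r * t1 + t * r3, by module⟩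
  · rintro ⟨r, s, t, rfl⟩
    have hmem : ∀ (u : Λ) (r : k), u ∈ ({D.w 1 β γ, D.y * D.x, D.z * D.x} : Set Λ) →
        r • u ∈ Submodule.span Λᵐᵒᵖ {D.w 1 β γ, D.y * D.x, D.z * D.x} := by
      intro u r hu
      have : r • u = (MulOpposite.op (algebraMap k Λ r)) • u := by
        show r • u = u * algebraMap k Λ r
        rw [← Algebra.commutes, ← Algebra.smul_def]
      rw [this]
      exact Submodule.smul_mem _ _ (Submodule.subset_span hu)
    refine Submodule.add_mem _ (Submodule.add_mem _ ?_ ?_) ?_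
    · exact hmem _ _ (by simp)
    · exact hmem _ _ (by simp)
    · exact hmem _ _ (by simp)

/-- L4: `z` is not in the ideal when `γ ≠ 0`. -/
lemma z_not_combo {β γ : k} (hγ : γ ≠ 0) :
    ¬ ∃ r s t : k, D.z = r • D.w 1 β γ + s • (D.y * D.x) + t • (D.z * D.x) := by
  rintro ⟨r, s, t, h⟩
  rw [w_def] at h
  have h0 : (0:k) • (1:Λ) + (-r) • D.x + (-(r * β)) • D.y + (1 - r * γ) • D.z
      + (-s) • (D.y * D.x) + (-t) • (D.z * D.x) = 0 := by
    linear_combination (norm := module) h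
  obtain ⟨-, h1, -, h3, -, -⟩ := D.indep6 h0
  rw [neg_eq_zero] at h1
  rw [h1, zero_mul, sub_zero] at h3
  exact one_ne_zero h3

/-- L5: for `β = -1`, anything killing `w` on the right also kills `z`. -/
lemma mul_w_z {γ : k} (hγ : γ ≠ 0) (u : Λ) (h : u * D.w 1 (-1) γ = 0) :
    u * D.z = 0 := by
  obtain ⟨c, rfl⟩ := D.exists_repr u
  rw [D.mul_w_expand] at h
  obtain ⟨-, h1, h2, -, h4, h5⟩ := D.indep6 (a0 := 0) (by rw [zero_smul, zero_add]; exact h)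
  have hc1 : c 1 = 0 := by
    have h5' : γ * c 1 = 0 := by linear_combination h5
    exact (mul_eq_zero.mp h5').resolve_left hγ
  have hc2 : c 2 = 0 := by
    rw [hc1] at h4
    simpa using h4
  rw [h1, hc1, hc2]
  simp only [zero_smul, zero_add, add_mul, smul_mul_assoc, D.hzz, D.mYz, D.mZz,
    smul_zero, add_zero]

/-- L8: when `1 + q⁻¹ b ≠ 0`, right-annihilators of `w(1, q⁻¹b, -(1+q⁻¹b)c)`
are in the combo span of `w(1,b,c)`. -/
lemma mul_w_mem (hq : q ≠ 0) {b c : k} (h1 : 1 + q⁻¹ * b ≠ 0) (u : Λ)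
    (h : u * D.w 1 (q⁻¹ * b) (-(1 + q⁻¹ * b) * c) = 0) :
    ∃ r s t : k, u = r • D.w 1 b c + s • (D.y * D.x) + t • (D.z * D.x) := by
  obtain ⟨cc, rfl⟩ := D.exists_repr u
  rw [D.mul_w_expand] at h
  obtain ⟨-, hx1, -, -, h4, h5⟩ := D.indep6 (a0 := 0) (by rw [zero_smul, zero_add]; exact h)
  have hc2 : cc 2 = b * cc 1 := by
    linear_combination h4 + b * cc 1 * (mul_inv_cancel₀ hq)
  have hc3 : cc 3 = c * cc 1 := by
    have h5' : (1 + q⁻¹ * b) * (cc 3 - c * cc 1) = 0 := by linear_combination h5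
    rcases mul_eq_zero.mp h5' with h | h
    · exact absurd h h1
    · exact sub_eq_zero.mp h
  refine ⟨cc 1, cc 4, cc 5, ?_⟩
  rw [hx1, w_def, hc2, hc3]
  match_scalars <;> ring

end LambdaAlg

namespace LambdaAlg2
variable {k : Type} [Field k] {q : k} {Λ : Type} [Ring Λ] [Algebra k Λ]
open LambdaAlg

/-- Left multiplication as a map of right modules. -/
def mulLeftHom (u : Λ) : Λ →ₗ[Λᵐᵒᵖ] Λ where
  toFun a := u * a
  map_add' := mul_add u
  map_smul' m a := by
    simp only [MulOpposite.smul_eq_mul_unop, RingHom.id_apply, mul_assoc]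

@[simp] lemma mulLeftHom_apply (u a : Λ) : mulLeftHom u a = u * a := rfl

variable (D : LambdaAlg k q Λ)

lemma mem_U'_iff' (hq : q ≠ 0) (β γ : k) (a : Λ) :
    a ∈ D.U' 1 β γ ↔
      ∃ r s t : k, a = r • D.w 1 β γ + s • (D.y * D.x) + t • (D.z * D.x) :=
  D.mem_U'_iff hq β γ a

lemma ker_mulLeftHom_w (hq : q ≠ 0) (β γ : k) :
    LinearMap.ker (mulLeftHom (D.w 1 β γ)) = D.U' 1 (q⁻¹ * β) (-(1 + q⁻¹ * β) * γ) := by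
  ext a
  rw [LinearMap.mem_ker, mulLeftHom_apply, D.w_mul_eq_zero_iff hq,
    mem_U'_iff' D hq]

lemma part1_rev (hq : q ≠ 0) (b c : k) (hb : b ≠ -1) :
    ∃ (n : ℕ) (f : D.M' 1 b c →ₗ[Λᵐᵒᵖ] (Fin n → Λ)), Function.Injective f := by
  have hb1 : 1 + b ≠ 0 := fun h => hb (eq_neg_of_add_eq_zero_right h)
  set u : Λ := D.w 1 (q * b) (-(c / (1 + b))) with hu
  have e1 : q⁻¹ * (q * b) = b := inv_mul_cancel_left₀ hq b
  have e2 : -(1 + b) * (-(c / (1 + b))) = c := by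
    field_simp
  have key : ∀ a : Λ, u * a = 0 ↔ a ∈ D.U' 1 b c := by
    intro a
    rw [hu, D.w_mul_eq_zero_iff hq, mem_U'_iff' D hq, e1, e2]
  have hker : LinearMap.ker (mulLeftHom u) = D.U' 1 b c := by
    ext a; rw [LinearMap.mem_ker, mulLeftHom_apply, key]
  set g : D.M' 1 b c →ₗ[Λᵐᵒᵖ] Λ :=
    (D.U' 1 b c).liftQ (mulLeftHom u) (le_of_eq hker.symm) with hg
  have hginj : Function.Injective g := by
    rw [← LinearMap.ker_eq_bot, hg, Submodule.ker_liftQ_eq_bot]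
    exact le_of_eq hker
  exact ⟨1, LinearMap.pi (fun _ : Fin 1 => g),
    fun a b hab => hginj (congrFun hab 0)⟩

lemma part1_fwd (hq : q ≠ 0) (c : k) (hc : c ≠ 0)
    (H : ∃ (n : ℕ) (f : D.M' 1 (-1) c →ₗ[Λᵐᵒᵖ] (Fin n → Λ)), Function.Injective f) :
    False := by
  obtain ⟨n, f, hf⟩ := H
  set zbar : D.M' 1 (-1) c := Submodule.Quotient.mk D.z with hzbar
  have hz : zbar ≠ 0 := by
    rw [hzbar, ne_eq, Submodule.Quotient.mk_eq_zero, mem_U'_iff' D hq]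
    exact D.z_not_combo hc
  have hw : f (Submodule.Quotient.mk (D.w 1 (-1) c)) = 0 := by
    rw [(Submodule.Quotient.mk_eq_zero (D.U' 1 (-1) c)).mpr
      (Submodule.subset_span (R := Λᵐᵒᵖ)
        (s := ({D.w 1 (-1) c, D.y * D.x, D.z * D.x} : Set Λ)) (by simp)), map_zero]
  set F : Fin n → Λ := f (Submodule.Quotient.mk 1) with hF
  have hFw : ∀ i, F i * D.w 1 (-1) c = 0 := by
    intro i
    have : Submodule.Quotient.mk (p := D.U' 1 (-1) c) (D.w 1 (-1) c)
        = (MulOpposite.op (D.w 1 (-1) c)) • Submodule.Quotient.mk 1 := by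
      rw [← Submodule.Quotient.mk_smul]
      congr 1
      show D.w 1 (-1) c = 1 * D.w 1 (-1) c
      rw [one_mul]
    rw [this, map_smul] at hw
    have := congrFun hw i
    simpa [hF, MulOpposite.smul_eq_mul_unop] using this
  have hfz : f zbar = 0 := by
    have : zbar = (MulOpposite.op D.z) • Submodule.Quotient.mk 1 := by
      rw [hzbar, ← Submodule.Quotient.mk_smul]
      congr 1
      show D.z = 1 * D.z
      rw [one_mul]
    rw [this, map_smul]
    funext i
    show (MulOpposite.op D.z) • (F i) = 0
    rw [MulOpposite.smul_eq_mul_unop]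
    exact D.mul_w_z hc (F i) (hFw i)
  exact hz (hf (by rw [hfz, map_zero]))

lemma part3 (hq : q ≠ 0) (b c : k) :
    Nonempty ((D.U' 1 b c) ≃ₗ[Λᵐᵒᵖ] D.M' 1 (q⁻¹ * b) (-(1 + q⁻¹ * b) * c)) := by
  have hmem : ∀ a : Λ, mulLeftHom (D.w 1 b c) a ∈ D.U' 1 b c := by
    intro a
    rw [mem_U'_iff' D hq]
    exact (D.exists_w_mul_iff hq b c _).mp ⟨a, rfl⟩
  set f : Λ →ₗ[Λᵐᵒᵖ] (D.U' 1 b c) :=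
    (mulLeftHom (D.w 1 b c)).codRestrict (D.U' 1 b c) hmem with hfdef
  have hsurj : Function.Surjective f := by
    rintro ⟨v, hv⟩
    obtain ⟨r, s, t, rfl⟩ := (mem_U'_iff' D hq b c v).mp hv
    obtain ⟨m, hm⟩ := (D.exists_w_mul_iff hq b c _).mpr ⟨r, s, t, rfl⟩
    exact ⟨m, Subtype.ext hm⟩
  have hker : LinearMap.ker f = D.U' 1 (q⁻¹ * b) (-(1 + q⁻¹ * b) * c) := by
    rw [hfdef, LinearMap.ker_codRestrict, ker_mulLeftHom_w D hq]
  exact ⟨((Submodule.quotEquivOfEq _ _ hker.symm).trans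
    (f.quotKerEquivOfSurjective hsurj)).symm⟩

end LambdaAlg2

namespace LambdaAlg
variable {k : Type} [Field k] {q : k} {Λ : Type} [Ring Λ] [Algebra k Λ]
variable (D : LambdaAlg k q Λ)

/-- L2': the range of right multiplication by `w(1,β,γ)` when `γ ≠ 0`. -/
lemma exists_mul_w_iff (hq : q ≠ 0) (β : k) {γ : k} (hγ : γ ≠ 0) (a : Λ) :
    (∃ m, m * D.w 1 β γ = a) ↔ ∃ r s t : k,
      a = r • D.w 1 β γ + s • (D.y * D.x) + t • (D.z * D.x) := by
  constructor
  · rintro ⟨m, rfl⟩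
    obtain ⟨c, rfl⟩ := D.exists_repr m
    rw [D.mul_w_expand]
    exact ⟨c 0, c 2 - q * β * c 1, γ * c 1 + (1 + β) * c 3, by rw [w_def]; module⟩
  · rintro ⟨r, s, t, rfl⟩
    refine ⟨r • (1:Λ) + (t * γ⁻¹) • D.x + (s + t * γ⁻¹ * q * β) • D.y, ?_⟩
    have : r • (1:Λ) + (t * γ⁻¹) • D.x + (s + t * γ⁻¹ * q * β) • D.y
        = r • (1:Λ) + (t * γ⁻¹) • D.x + (s + t * γ⁻¹ * q * β) • D.y + (0:k) • D.z
          + (0:k) • (D.y * D.x) + (0:k) • (D.z * D.x) := by module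
    rw [this, D.mul_w_expand, w_def]
    match_scalars <;> (field_simp; try ring)

/-- `z` kills `w(1,β,γ)` when `1 + β = 0`. -/
lemma z_mul_w (β γ : k) (hβ : 1 + β = 0) : D.z * D.w 1 β γ = 0 := by
  have : D.z = (0:k) • (1:Λ) + (0:k) • D.x + (0:k) • D.y + (1:k) • D.z
      + (0:k) • (D.y * D.x) + (0:k) • (D.z * D.x) := by module
  rw [this, D.mul_w_expand]
  match_scalars <;> simp [hβ]

end LambdaAlg

namespace LambdaAlg2
open LambdaAlg
variable {k : Type} [Field k] {q : k} {Λ : Type} [Ring Λ] [Algebra k Λ]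

/-- the Λᵐᵒᵖ-linear equivalence Λ ≃ Λᵐᵒᵖ -/
def opEquiv : Λ ≃ₗ[Λᵐᵒᵖ] Λᵐᵒᵖ where
  toFun := MulOpposite.op
  invFun := MulOpposite.unop
  map_add' _ _ := rfl
  map_smul' _ _ := rfl
  left_inv _ := rfl
  right_inv _ := rfl

instance : Projective (ModuleCat.of Λᵐᵒᵖ Λ) :=
  ModuleCat.projective_of_free (ι := Fin 1)
    ((Module.Basis.singleton (Fin 1) Λᵐᵒᵖ).map (opEquiv).symm)

variable (D : LambdaAlg k q Λ)

/-- The sequence of parameters of the syzygies. -/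
def pr (q b c : k) : ℕ → k × k
  | 0 => (b, c)
  | n+1 => (q⁻¹ * (pr q b c n).1, -(1 + q⁻¹ * (pr q b c n).1) * (pr q b c n).2)

/-- The free resolution of `M'(1,b,c)`. -/
noncomputable def resC (hq : q ≠ 0) (b c : k) : ChainComplex (ModuleCat Λᵐᵒᵖ) ℕ :=
  ChainComplex.of (fun _ => ModuleCat.of Λᵐᵒᵖ Λ)
    (fun n => ModuleCat.ofHom (mulLeftHom (D.w 1 (pr q b c n).1 (pr q b c n).2)))
    (fun n => by
      have h0 : D.w 1 (pr q b c n).1 (pr q b c n).2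
          * D.w 1 (pr q b c (n+1)).1 (pr q b c (n+1)).2 = 0 := by
        show D.w 1 (pr q b c n).1 (pr q b c n).2
          * D.w 1 (q⁻¹ * (pr q b c n).1) (-(1 + q⁻¹ * (pr q b c n).1) * (pr q b c n).2) = 0
        exact D.w_mul_w' hq _ _
      apply ModuleCat.hom_ext
      apply LinearMap.ext
      intro a
      show mulLeftHom (D.w 1 (pr q b c n).1 (pr q b c n).2)
        (mulLeftHom (D.w 1 (pr q b c (n+1)).1 (pr q b c (n+1)).2) a) = 0
      rw [mulLeftHom_apply, mulLeftHom_apply, ← mul_assoc, h0, zero_mul])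

lemma resC_X (hq : q ≠ 0) (b c : k) (n : ℕ) :
    (resC D hq b c).X n = ModuleCat.of Λᵐᵒᵖ Λ := rfl

lemma resC_d (hq : q ≠ 0) (b c : k) (n : ℕ) :
    (resC D hq b c).d (n+1) n
      = ModuleCat.ofHom (mulLeftHom (D.w 1 (pr q b c n).1 (pr q b c n).2)) := by
  exact ChainComplex.of_d (fun _ => ModuleCat.of Λᵐᵒᵖ Λ)
    (fun n => ModuleCat.ofHom (mulLeftHom (D.w 1 (pr q b c n).1 (pr q b c n).2))) n

/-- exactness of the resolution in positive degrees -/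
lemma resC_exactAt (hq : q ≠ 0) (b c : k) (n : ℕ) :
    (resC D hq b c).ExactAt (n+1) := by
  rw [HomologicalComplex.exactAt_iff' _ (n+1+1) (n+1) n (by simp) (by simp)]
  rw [ShortComplex.moduleCat_exact_iff]
  intro (a : Λ) ha
  have ha0 : (resC D hq b c).d (n+1) n a = 0 := ha
  rw [resC_d D hq b c n] at ha0
  have ha' : D.w 1 (pr q b c n).1 (pr q b c n).2 * a = 0 := ha0
  obtain ⟨r, s, t, hr⟩ := (D.w_mul_eq_zero_iff hq _ _ a).mp ha'
  obtain ⟨m, hm⟩ := (D.exists_w_mul_iff hq (q⁻¹ * (pr q b c n).1)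
      (-(1 + q⁻¹ * (pr q b c n).1) * (pr q b c n).2) a).mpr ⟨r, s, t, hr⟩
  refine ⟨m, ?_⟩
  show (resC D hq b c).d (n+1+1) (n+1) m = a
  rw [resC_d D hq b c (n+1)]
  exact hm

end LambdaAlg2

namespace LambdaAlg2
open LambdaAlg
variable {k : Type} [Field k] {q : k} {Λ : Type} [Ring Λ] [Algebra k Λ]
variable (D : LambdaAlg k q Λ)

lemma w_mem_U' (b c : k) : D.w 1 b c ∈ D.U' 1 b c :=
  Submodule.subset_span (by simp)

lemma mulw_mem_U' (hq : q ≠ 0) (b c : k) (a : Λ) : D.w 1 b c * a ∈ D.U' 1 b c := by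
  rw [mem_U'_iff' D hq]
  exact (D.exists_w_mul_iff hq b c _).mp ⟨a, rfl⟩

lemma hdcomp (hq : q ≠ 0) (b c : k) :
    ModuleCat.ofHom (X := Λ) (mulLeftHom (D.w 1 b c))
      ≫ ModuleCat.ofHom (D.U' 1 b c).mkQ = 0 := by
  apply ModuleCat.hom_ext
  apply LinearMap.ext
  intro a
  exact (Submodule.Quotient.mk_eq_zero _).mpr (mulw_mem_U' D hq b c a)

/-- The augmentation map. -/
noncomputable def resPi0 (hq : q ≠ 0) (b c : k) :
    resC D hq b c ⟶ (ChainComplex.single₀ (ModuleCat Λᵐᵒᵖ)).obj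
      (ModuleCat.of Λᵐᵒᵖ (D.M' 1 b c)) :=
  (ChainComplex.toSingle₀Equiv _ _).symm
    ⟨ModuleCat.ofHom (D.U' 1 b c).mkQ, by
      rw [resC_d D hq b c 0]
      exact hdcomp D hq b c⟩

lemma resPi0_f0 (hq : q ≠ 0) (b c : k) :
    (resPi0 D hq b c).f 0 = ModuleCat.ofHom (D.U' 1 b c).mkQ := by
  apply ChainComplex.toSingle₀Equiv_symm_apply_f_zero

lemma exact0 (hq : q ≠ 0) (b c : k) :
    (ShortComplex.mk (ModuleCat.ofHom (X := Λ) (mulLeftHom (D.w 1 b c)))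
      (ModuleCat.ofHom (D.U' 1 b c).mkQ) (hdcomp D hq b c)).Exact := by
  rw [ShortComplex.moduleCat_exact_iff]
  intro (a : Λ) ha
  have ha' : a ∈ D.U' 1 b c := by
    rwa [← Submodule.Quotient.mk_eq_zero (D.U' 1 b c)]
  obtain ⟨r, s, t, hr⟩ := (mem_U'_iff' D hq b c a).mp ha'
  obtain ⟨m, hm⟩ := (D.exists_w_mul_iff hq b c a).mpr ⟨r, s, t, hr⟩
  exact ⟨m, hm⟩

/-- The projective resolution of `M'(1,b,c)`. -/
noncomputable def proRes (hq : q ≠ 0) (b c : k) :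
    ProjectiveResolution (ModuleCat.of Λᵐᵒᵖ (D.M' 1 b c)) where
  complex := resC D hq b c
  projective n := inferInstanceAs (Projective (ModuleCat.of Λᵐᵒᵖ Λ))
  π := resPi0 D hq b c
  quasiIso := ⟨fun n => by
    cases n with
    | zero =>
      rw [ChainComplex.quasiIsoAt₀_iff, ShortComplex.quasiIso_iff_of_zeros']
      · refine (ShortComplex.exact_and_epi_g_iff_of_iso ?_).2
          ⟨exact0 D hq b c, (ModuleCat.epi_iff_surjective _).mpr
            (Submodule.mkQ_surjective _)⟩
        refine ShortComplex.isoMk (Iso.refl _) (Iso.refl _) (Iso.refl _) ?_ ?_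
        · simp only [Iso.refl_hom, Category.id_comp, Category.comp_id]
          exact (resC_d D hq b c 0).symm
        · simp only [Iso.refl_hom, Category.id_comp, Category.comp_id,
            HomologicalComplex.shortComplexFunctor'_map_τ₂]
          exact (resPi0_f0 D hq b c).symm
      all_goals rfl
    | succ n =>
      rw [quasiIsoAt_iff_exactAt']
      · exact resC_exactAt D hq b c n
      · exact ChainComplex.exactAt_succ_single_obj _ _⟩

end LambdaAlg2

namespace LambdaAlg2
open LambdaAlg
variable {k : Type} [Field k] {q : k} {Λ : Type} [Ring Λ] [Algebra k Λ]
variable (D : LambdaAlg k q Λ)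

lemma pr1_eq (b c : k) : pr q b c 1 = (q⁻¹ * b, -(1 + q⁻¹ * b) * c) := rfl

lemma hom_apply_eq (g : Λ →ₗ[Λᵐᵒᵖ] Λ) (a : Λ) : g a = g 1 * a := by
  have h : a = (MulOpposite.op a) • (1:Λ) := (one_mul a).symm
  conv_lhs => rw [h]
  rw [map_smul]
  rfl

theorem ext1_iszero_iff (hq : q ≠ 0) (b c : k) (hc : c ≠ 0) :
    IsZero (((Ext k (ModuleCat Λᵐᵒᵖ) 1).obj
        (op (ModuleCat.of Λᵐᵒᵖ (D.M' 1 b c)))).obj (ModuleCat.of Λᵐᵒᵖ Λ))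
      ↔ b ≠ -q := by
  set Y : ModuleCat Λᵐᵒᵖ := ModuleCat.of Λᵐᵒᵖ Λ with hY
  set P := proRes D hq b c with hP
  set K := P.complex.linearYonedaObj k Y with hK
  have isoE := P.isoExt (R := k) 1 Y
  have step1 : IsZero (((Ext k (ModuleCat Λᵐᵒᵖ) 1).obj
      (op (ModuleCat.of Λᵐᵒᵖ (D.M' 1 b c)))).obj Y) ↔ IsZero (K.homology 1) :=
    ⟨fun h => IsZero.of_iso h isoE.symm, fun h => IsZero.of_iso h isoE⟩
  rw [step1, ← HomologicalComplex.exactAt_iff_isZero_homology,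
    HomologicalComplex.exactAt_iff' K 0 1 2 (by simp) (by simp),
    ShortComplex.moduleCat_exact_iff]
  have hd21 : P.complex.d 2 1
      = ModuleCat.ofHom (X := Λ) (mulLeftHom (D.w 1 (pr q b c 1).1 (pr q b c 1).2)) :=
    resC_d D hq b c 1
  have hd10 : P.complex.d 1 0
      = ModuleCat.ofHom (X := Λ) (mulLeftHom (D.w 1 b c)) :=
    resC_d D hq b c 0
  constructor
  · -- exactness → b ≠ -q
    intro hex hbq
    subst hbq
    set g : P.complex.X 1 ⟶ Y := ModuleCat.ofHom (X := Λ) (mulLeftHom D.z) with hg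
    have hzw : D.z * D.w 1 (pr q (-q) c 1).1 (pr q (-q) c 1).2 = 0 := by
      rw [pr1_eq]
      refine D.z_mul_w _ _ ?_
      show 1 + q⁻¹ * -q = 0
      rw [mul_neg, inv_mul_cancel₀ hq]
      ring
    have hcyc : (K.sc' 0 1 2).g g = 0 := by
      show (K.d 1 2) g = 0
      rw [ChainComplex.linearYonedaObj_d]
      show P.complex.d 2 1 ≫ g = 0
      rw [hd21]
      apply ModuleCat.hom_ext
      apply LinearMap.ext
      intro (a : Λ)
      show mulLeftHom D.z
        (mulLeftHom (D.w 1 (pr q (-q) c 1).1 (pr q (-q) c 1).2) a) = 0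
      rw [mulLeftHom_apply, mulLeftHom_apply, ← mul_assoc, hzw, zero_mul]
    obtain ⟨f0, hf⟩ := hex g hcyc
    let f : P.complex.X 0 ⟶ Y := f0
    have hf' : P.complex.d 1 0 ≫ f = g := by
      have h0 : (K.d 0 1) f = g := hf
      rw [ChainComplex.linearYonedaObj_d] at h0
      exact h0
    rw [hd10] at hf'
    have h1 := LinearMap.congr_fun (congrArg ModuleCat.Hom.hom hf') (1 : Λ)
    have h2 : f (D.w 1 (-q) c * (1:Λ)) = D.z * (1:Λ) := h1
    rw [mul_one, mul_one] at h2
    have h3 := (hom_apply_eq f.hom (D.w 1 (-q) c)).symm.trans h2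
    have : ∃ r s t : k, D.z = r • D.w 1 (-q) c + s • (D.y * D.x) + t • (D.z * D.x) :=
      (D.exists_mul_w_iff hq (-q) hc D.z).mp ⟨_, h3⟩
    exact D.z_not_combo hc this
  · -- b ≠ -q → exactness
    intro hbq g0 hcyc
    let g : P.complex.X 1 ⟶ Y := g0
    have hb1 : 1 + q⁻¹ * b ≠ 0 := by
      intro h
      apply hbq
      have h2 : q * (1 + q⁻¹ * b) = 0 := by rw [h, mul_zero]
      rw [mul_add, mul_one, mul_inv_cancel_left₀ hq] at h2
      exact eq_neg_of_add_eq_zero_right h2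
    have h1 : (K.d 1 2) g = 0 := hcyc
    rw [ChainComplex.linearYonedaObj_d] at h1
    have h2 : P.complex.d 2 1 ≫ g = 0 := h1
    rw [hd21] at h2
    have h3 := LinearMap.congr_fun (congrArg ModuleCat.Hom.hom h2) (1 : Λ)
    have h4 : g (D.w 1 (pr q b c 1).1 (pr q b c 1).2 * (1:Λ)) = 0 := h3
    rw [mul_one] at h4
    have h4' : g (D.w 1 (q⁻¹ * b) (-(1 + q⁻¹ * b) * c)) = 0 := by
      rw [pr1_eq] at h4
      exact h4
    have hlam := (hom_apply_eq g.hom (D.w 1 (q⁻¹ * b) (-(1 + q⁻¹ * b) * c))).symm.trans h4'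
    obtain ⟨r, s, t, hcombo⟩ := D.mul_w_mem hq hb1 _ hlam
    obtain ⟨μ, hμ⟩ := (D.exists_mul_w_iff hq b hc _).mpr ⟨r, s, t, hcombo⟩
    refine ⟨ModuleCat.ofHom (X := Λ) (mulLeftHom μ), ?_⟩
    show (K.d 0 1) (ModuleCat.ofHom (X := Λ) (mulLeftHom μ)) = g0
    rw [ChainComplex.linearYonedaObj_d]
    show P.complex.d 1 0 ≫ ModuleCat.ofHom (X := Λ) (mulLeftHom μ) = g
    rw [hd10]
    apply ModuleCat.hom_ext
    apply LinearMap.ext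
    intro (a : Λ)
    show mulLeftHom μ (mulLeftHom (D.w 1 b c) a) = g a
    rw [mulLeftHom_apply, mulLeftHom_apply, ← mul_assoc, hμ]
    exact (hom_apply_eq g.hom a).symm

end LambdaAlg2

/-- For `c ≠ 0`: the right module `M′(1,b,c)` is torsionless iff `b ≠ −1`;
`Ext¹(M′(1,b,c), Λ) = 0` in right `Λ`-modules iff `b ≠ −q`; and if `b ≠ −q` then
`U′(1,b,c) ≅ M′(ω′(1,b,c)) = M′(1, q⁻¹b, −(1+q⁻¹b)c)` as right `Λ`-modules. -/
theorem statement19 (k : Type) [Field k] (q : k) (hq : q ≠ 0)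
    (Λ : Type) [Ring Λ] [Algebra k Λ] (D : LambdaAlg k q Λ)
    (b c : k) (hc : c ≠ 0) :
    ((∃ (n : ℕ) (f : D.M' 1 b c →ₗ[Λᵐᵒᵖ] (Fin n → Λ)), Function.Injective f)
       ↔ b ≠ -1)
    ∧ (IsZero (((Ext k (ModuleCat Λᵐᵒᵖ) 1).obj
          (op (ModuleCat.of Λᵐᵒᵖ (D.M' 1 b c)))).obj (ModuleCat.of Λᵐᵒᵖ Λ))
       ↔ b ≠ -q)
    ∧ (b ≠ -q →
        Nonempty (↥(D.U' 1 b c) ≃ₗ[Λᵐᵒᵖ] D.M' 1 (q⁻¹ * b) (-(1 + q⁻¹ * b) * c))) := by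
  refine ⟨?_, ?_, ?_⟩
  · constructor
    · intro H hb
      subst hb
      exact (LambdaAlg2.part1_fwd D hq c hc H).elim
    · exact LambdaAlg2.part1_rev D hq b c
  · exact LambdaAlg2.ext1_iszero_iff D hq b c hc
  · intro _
    exact LambdaAlg2.part3 D hq b c
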